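/- arXiv:1805.02746 — 2 statements merged into one kernel-verified Lean document; each statement's English description precedes it below -/
import Mathlib

section
/- Let 𝒢 ⊆ [ℕ]^{<ℕ} be a hereditary family of finite subsets of ℕ. Then the following are equivalent: (i) there is no infinite set M ⊆ ℕ with all finite subsets of M in 𝒢; (ii) 𝒢 is compact in the Cantor topology (identifying finite sets with points of 2^ℕ); (iii) the Cantor–Bendixson index of 𝒢 is an ordinal (i.e., some Cantor–Bendixson derivative of 𝒢 is empty); (iv) the Cantor–Bendixson index of 𝒢 is countable. -/
/-- Identify a finite subset of `ℕ` with a point of the Cantor space `ℕ → Bool`. -/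
def toCantor (F : Finset ℕ) : ℕ → Bool := fun n => decide (n ∈ F)

/-- A family of finite subsets of `ℕ` is hereditary if it is closed under subsets. -/
def Hereditary (G : Set (Finset ℕ)) : Prop := ∀ ⦃E F : Finset ℕ⦄, E ⊆ F → F ∈ G → E ∈ G

/-- The Cantor–Bendixson derivative. -/
def cbDeriv {α : Type*} [TopologicalSpace α] (K : Set α) : Set α :=
  {x | x ∈ K ∧ x ∈ closure (K \ {x})}

/-- Transfinite Cantor–Bendixson iterates. -/
noncomputable def cbIter {α : Type*} [TopologicalSpace α] (K : Set α) (ξ : Ordinal) : Set α :=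
  Ordinal.limitRecOn ξ K (fun _ S => cbDeriv S)
    (fun o _ ih => ⋂ (ζ : Ordinal) (h : ζ < o), ih ζ h)

universe u

lemma toCantor_injective : Function.Injective toCantor := by
  intro F F' h
  ext n
  have := congrFun h n
  simpa [toCantor] using this

lemma cyl_mem_nhds (x : ℕ → Bool) (n : ℕ) : {y : ℕ → Bool | ∀ i < n, y i = x i} ∈ nhds x := by
  have : Set.pi (↑(Finset.range n) : Set ℕ) (fun i => {x i}) ∈ nhds x := by
    apply set_pi_mem_nhds (Finset.range n).finite_toSet
    intro i _
    exact (isOpen_discrete {x i}).mem_nhds rfl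
  convert this using 1
  ext y
  simp [Set.mem_pi]

lemma cbDeriv_subset {α : Type*} [TopologicalSpace α] (K : Set α) : cbDeriv K ⊆ K :=
  fun _ h => h.1

lemma cbDeriv_mono {α : Type*} [TopologicalSpace α] {S T : Set α} (h : S ⊆ T) :
    cbDeriv S ⊆ cbDeriv T := by
  intro x hx
  exact ⟨h hx.1, closure_mono (Set.diff_subset_diff_left h) hx.2⟩

lemma cbIter_zero {α : Type*} [TopologicalSpace α] (K : Set α) : cbIter K 0 = K :=
  Ordinal.limitRecOn_zero ..

lemma cbIter_succ {α : Type*} [TopologicalSpace α] (K : Set α) (ξ : Ordinal) :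
    cbIter K (ξ + 1) = cbDeriv (cbIter K ξ) := by
  rw [cbIter, Ordinal.add_one_eq_succ, Ordinal.limitRecOn_succ]
  rfl

lemma cbIter_limit {α : Type*} [TopologicalSpace α] (K : Set α) {ξ : Ordinal} (h : Order.IsSuccLimit ξ) :
    cbIter K ξ = ⋂ (ζ : Ordinal) (_ : ζ < ξ), cbIter K ζ := by
  rw [cbIter, Ordinal.limitRecOn_limit _ _ _ _ h]
  rfl

lemma cbIter_antitone {α : Type*} [TopologicalSpace α] (K : Set α) :
    ∀ {ζ ξ : Ordinal}, ζ ≤ ξ → cbIter K ξ ⊆ cbIter K ζ := by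
  intro ζ ξ
  induction ξ using Ordinal.induction with
  | h ξ ih =>
    intro hζξ
    rcases eq_or_lt_of_le hζξ with rfl | hlt
    · exact subset_rfl
    rcases Ordinal.zero_or_succ_or_isSuccLimit ξ with rfl | ⟨η, rfl⟩ | hlim
    · exact absurd hlt (not_lt_zero (a := ζ))
    · rw [← Ordinal.add_one_eq_succ, cbIter_succ]
      exact (cbDeriv_subset _).trans (ih η (Order.lt_succ η)
        (Order.le_of_lt_succ hlt))
    · rw [cbIter_limit K hlim]
      exact Set.iInter₂_subset ζ hlt

lemma cbIter_fixed {α : Type*} [TopologicalSpace α] (K : Set α) {ζ : Ordinal}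
    (hfix : cbIter K (ζ + 1) = cbIter K ζ) :
    ∀ {η : Ordinal}, ζ ≤ η → cbIter K η = cbIter K ζ := by
  intro η
  induction η using Ordinal.induction with
  | h η ih =>
    intro hζη
    rcases eq_or_lt_of_le hζη with rfl | hlt
    · rfl
    rcases Ordinal.zero_or_succ_or_isSuccLimit η with rfl | ⟨θ, rfl⟩ | hlim
    · exact absurd hlt (not_lt_zero (a := ζ))
    · have hθ : ζ ≤ θ := Order.le_of_lt_succ hlt
      rw [← Ordinal.add_one_eq_succ, cbIter_succ, ih θ (Order.lt_succ θ) hθ,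
        ← cbIter_succ, hfix]
    · rw [cbIter_limit K hlim]
      apply subset_antisymm
      · exact Set.iInter₂_subset ζ hlt
      · refine Set.subset_iInter₂ fun θ hθ => ?_
        rcases le_or_gt ζ θ with h | h
        · rw [ih θ hθ h]
        · exact cbIter_antitone K h.le

lemma key_step {M : Set ℕ} (hM : M.Infinite) {S : Set (ℕ → Bool)}
    (hDS : toCantor '' {E : Finset ℕ | ↑E ⊆ M} ⊆ S) :
    toCantor '' {E : Finset ℕ | ↑E ⊆ M} ⊆ cbDeriv S := by
  rintro x ⟨E, hE, rfl⟩
  refine ⟨hDS ⟨E, hE, rfl⟩, ?_⟩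
  have hch : ∀ j : ℕ, ∃ m ∈ M, max j (E.sup id) < m := fun j => hM.exists_gt _
  choose m hmM hmgt using hch
  have hmE : ∀ j, m j ∉ E := by
    intro j hj
    have := Finset.le_sup (f := id) hj
    simp only [id] at this
    exact absurd ((le_max_right j _).trans_lt (hmgt j)) (not_lt.mpr this)
  set y : ℕ → (ℕ → Bool) := fun j => toCantor (insert (m j) E) with hy
  have hyD : ∀ j, y j ∈ toCantor '' {E : Finset ℕ | ↑E ⊆ M} := by
    intro j
    exact ⟨insert (m j) E, by
      simp only [Set.mem_setOf_eq, Finset.coe_insert]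
      exact Set.insert_subset (hmM j) hE, rfl⟩
  have hyne : ∀ j, y j ≠ toCantor E := by
    intro j h
    have := toCantor_injective h
    exact hmE j (this ▸ Finset.mem_insert_self (m j) E)
  have htend : Filter.Tendsto y Filter.atTop (nhds (toCantor E)) := by
    rw [tendsto_pi_nhds]
    intro i
    rw [nhds_discrete, Filter.tendsto_pure]
    filter_upwards [Filter.eventually_ge_atTop i] with j hj
    have hne : i ≠ m j := (lt_of_le_of_lt (hj.trans (le_max_left j _)) (hmgt j)).ne
    simp [hy, toCantor, Finset.mem_insert, hne]
  refine mem_closure_of_tendsto htend ?_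
  filter_upwards with j
  exact ⟨hDS (hyD j), hyne j⟩

lemma infinite_cbIter_nonempty {G : Set (Finset ℕ)} {M : Set ℕ} (hM : M.Infinite)
    (hsub : ∀ F : Finset ℕ, ↑F ⊆ M → F ∈ G) (ξ : Ordinal.{u}) :
    (cbIter (toCantor '' G) ξ).Nonempty := by
  have hD : ∀ ξ : Ordinal.{u}, toCantor '' {E : Finset ℕ | ↑E ⊆ M} ⊆ cbIter (toCantor '' G) ξ := by
    intro ξ
    induction ξ using Ordinal.induction with
    | h ξ ih =>
      rcases Ordinal.zero_or_succ_or_isSuccLimit ξ with rfl | ⟨η, rfl⟩ | hlim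
      · rw [cbIter_zero]
        rintro x ⟨E, hE, rfl⟩
        exact ⟨E, hsub E hE, rfl⟩
      · rw [← Ordinal.add_one_eq_succ, cbIter_succ]
        exact key_step hM (ih η (Order.lt_succ η))
      · rw [cbIter_limit _ hlim]
        exact Set.subset_iInter₂ fun ζ hζ => ih ζ hζ
  exact ⟨toCantor ∅, hD ξ ⟨∅, by simp, rfl⟩⟩

lemma closed_of_no_infinite {G : Set (Finset ℕ)} (hG : Hereditary G)
    (h : ¬ ∃ M : Set ℕ, M.Infinite ∧ ∀ F : Finset ℕ, ↑F ⊆ M → F ∈ G) :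
    IsClosed (toCantor '' G) := by
  rw [← closure_subset_iff_isClosed]
  intro x hx
  set M : Set ℕ := {n | x n = true} with hMdef
  have claim : ∀ E : Finset ℕ, ↑E ⊆ M → E ∈ G := by
    intro E hE
    set n := E.sup id + 1 with hn
    obtain ⟨y, hy1, F, hF, rfl⟩ := mem_closure_iff_nhds.mp hx _ (cyl_mem_nhds x n)
    refine hG (F := F) ?_ hF
    intro e he
    have hlt : e < n := Nat.lt_succ_of_le (Finset.le_sup (f := id) he)
    have := hy1 e hlt
    have hxe : x e = true := hE he
    rw [hxe] at this
    simpa [toCantor] using this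
  have hMfin : M.Finite := by
    by_contra hinf
    exact h ⟨M, hinf, claim⟩
  refine ⟨hMfin.toFinset, claim _ (by simp), ?_⟩
  funext i
  rcases Bool.eq_false_or_eq_true (x i) with h0 | h1
  · simp only [toCantor, h0]
    simp [hMfin.mem_toFinset, hMdef, h0]
  · simp only [toCantor, h1]
    simp [hMfin.mem_toFinset, hMdef, h1]

lemma not_compact_of_infinite {G : Set (Finset ℕ)} {M : Set ℕ} (hM : M.Infinite)
    (hsub : ∀ F : Finset ℕ, ↑F ⊆ M → F ∈ G) :
    ¬ IsCompact (toCantor '' G) := by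
  classical
  intro hcomp
  have hclosed : IsClosed (toCantor '' G) := hcomp.isClosed
  set x : ℕ → Bool := fun n => decide (n ∈ M) with hx
  have hFn : ∀ n : ℕ, (M ∩ Set.Iio n).Finite := fun n => (Set.finite_Iio n).inter_of_right M
  set F : ℕ → Finset ℕ := fun n => (hFn n).toFinset with hF
  have hmem : ∀ n, toCantor (F n) ∈ toCantor '' G := by
    intro n
    exact ⟨F n, hsub _ (by intro i hi; simpa using (((hFn n).mem_toFinset.mp hi)).1), rfl⟩
  have htend : Filter.Tendsto (fun n => toCantor (F n)) Filter.atTop (nhds x) := by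
    rw [tendsto_pi_nhds]
    intro i
    rw [nhds_discrete, Filter.tendsto_pure]
    filter_upwards [Filter.eventually_gt_atTop i] with n hn
    simp only [toCantor, hF, (hFn n).mem_toFinset, hx]
    by_cases hiM : i ∈ M <;> simp [hiM, hn]
  have hxcl : x ∈ toCantor '' G := by
    rw [← hclosed.closure_eq]
    exact mem_closure_of_tendsto htend (Filter.Eventually.of_forall hmem)
  obtain ⟨F₀, _, hF₀⟩ := hxcl
  apply hM
  have : M = ↑F₀ := by
    ext i
    have := congrFun hF₀ i
    simp only [toCantor, hx] at this
    constructor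
    · intro hi
      have : decide (i ∈ F₀) = true := this.trans (by simp [hi])
      simpa using this
    · intro hi
      have hi' : i ∈ F₀ := hi
      have : decide (i ∈ M) = true := this.symm.trans (by simp [hi'])
      simpa using this
  rw [this]
  exact F₀.finite_toSet

/-- From a nonempty "perfect kernel" inside `toCantor '' G`, construct an infinite `M`. -/
lemma exists_infinite_of_fixed {G : Set (Finset ℕ)} (hG : Hereditary G)
    {S : Set (ℕ → Bool)} (hSA : S ⊆ toCantor '' G) (hfix : S ⊆ cbDeriv S)
    (hne : S.Nonempty) :
    ∃ M : Set ℕ, M.Infinite ∧ ∀ F : Finset ℕ, ↑F ⊆ M → F ∈ G := by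
  classical
  have step : ∀ F : Finset ℕ, toCantor F ∈ S → ∃ F' : Finset ℕ, toCantor F' ∈ S ∧ F ⊂ F' := by
    intro F hF
    have hcl : toCantor F ∈ closure (S \ {toCantor F}) := (hfix hF).2
    set n := F.sup id + 1 with hn
    obtain ⟨y, hy1, hyS, hyne⟩ := mem_closure_iff_nhds.mp hcl _ (cyl_mem_nhds (toCantor F) n)
    obtain ⟨F', _, rfl⟩ := hSA hyS
    refine ⟨F', hyS, ?_⟩
    rw [Finset.ssubset_iff_subset_ne]
    constructor
    · intro e he
      have hlt : e < n := Nat.lt_succ_of_le (Finset.le_sup (f := id) he)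
      have h2 := hy1 e hlt
      have h3 : toCantor F' e = true := by rw [h2]; simp [toCantor, he]
      simpa [toCantor] using h3
    · intro h
      exact hyne (by rw [h]; rfl)
  obtain ⟨x₀, hx₀⟩ := hne
  obtain ⟨F₀, _, rfl⟩ := hSA hx₀
  choose g hg1 hg2 using step
  let f : ℕ → {F : Finset ℕ // toCantor F ∈ S} := fun k =>
    Nat.rec ⟨F₀, hx₀⟩ (fun _ p => ⟨g p.1 p.2, hg1 p.1 p.2⟩) k
  have hss : ∀ k, (f k).1 ⊂ (f (k + 1)).1 := fun k => hg2 (f k).1 (f k).2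
  have hmono : Monotone (fun k => (f k).1) :=
    monotone_nat_of_le_succ fun k => (hss k).subset
  have hcard : ∀ k, k ≤ (f k).1.card := by
    intro k
    induction k with
    | zero => exact Nat.zero_le _
    | succ k ih => exact Nat.succ_le_of_lt (lt_of_le_of_lt ih (Finset.card_lt_card (hss k)))
  have hFG : ∀ k, (f k).1 ∈ G := by
    intro k
    obtain ⟨F', hF', hEq⟩ := hSA (f k).2
    rwa [toCantor_injective hEq] at hF'
  refine ⟨⋃ k, ↑(f k).1, ?_, ?_⟩
  · intro hfin
    set T := hfin.toFinset with hT
    have hsubT : ∀ k, (f k).1 ⊆ T := by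
      intro k e he
      rw [hT, Set.Finite.mem_toFinset]
      exact Set.mem_iUnion.mpr ⟨k, he⟩
    have := (hcard (T.card + 1)).trans (Finset.card_le_card (hsubT (T.card + 1)))
    omega
  · intro E hE
    have hk : ∀ e : ℕ, e ∈ E → ∃ k, e ∈ (f k).1 := by
      intro e he
      exact Set.mem_iUnion.mp (hE he)
    choose! k hk using hk
    have hEsub : E ⊆ (f (E.sup k)).1 := by
      intro e he
      exact hmono (Finset.le_sup (f := k) he) (hk e he)
    exact hG hEsub (hFG _)

/-- There is always a fixed point of the CB iteration. -/
lemma exists_cb_fixed {α : Type} [TopologicalSpace α] (K : Set α) :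
    ∃ ζ : Ordinal.{u}, cbIter K (ζ + 1) = cbIter K ζ := by
  by_contra h
  push_neg at h
  have hss : ∀ ζ : Ordinal.{u}, cbIter K (ζ + 1) ⊂ cbIter K ζ := fun ζ =>
    (cbIter_antitone K (le_of_lt (lt_add_one ζ))).ssubset_of_ne (h ζ)
  have hch : ∀ ζ : Ordinal.{u}, ∃ x, x ∈ cbIter K ζ ∧ x ∉ cbIter K (ζ + 1) := fun ζ =>
    Set.exists_of_ssubset (hss ζ)
  choose x hx1 hx2 using hch
  refine not_injective_of_ordinal x ?_
  intro ζ ζ' hEq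
  by_contra hne
  wlog hlt : ζ < ζ' generalizing ζ ζ'
  · exact this hEq.symm (Ne.symm hne) ((Ne.lt_or_gt hne).resolve_left hlt)
  have h1 : x ζ' ∈ cbIter K (ζ + 1) :=
    cbIter_antitone K (Order.add_one_le_iff.mpr hlt) (hx1 ζ')
  rw [← hEq] at h1
  exact hx2 ζ h1

/-- If some iterate is empty and `K` is countable, an iterate of countable index is empty. -/
lemma cb_countable_bound {α : Type} [TopologicalSpace α] [Nonempty α] (K : Set α)
    (hK : K.Countable) (h : ∃ ξ : Ordinal.{u}, cbIter K ξ = ∅) :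
    ∃ ξ : Ordinal.{u}, ξ < (Cardinal.aleph 1).ord ∧ cbIter K ξ = ∅ := by
  classical
  set s : Set Ordinal.{u} := {ξ | cbIter K ξ = ∅} with hs
  have hsne : s.Nonempty := h
  set ξ₀ := sInf s with hξ₀
  have hξ₀s : ξ₀ ∈ s := csInf_mem hsne
  refine ⟨ξ₀, ?_, hξ₀s⟩
  have hlt : ∀ ζ < ξ₀, (cbIter K ζ).Nonempty ∧ cbIter K (ζ + 1) ≠ cbIter K ζ := by
    intro ζ hζ
    constructor
    · rw [Set.nonempty_iff_ne_empty]
      intro hemp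
      have hin : ζ ∈ s := hemp
      exact absurd (csInf_le' hin) (not_le.mpr hζ)
    · intro hfix
      have := cbIter_fixed K hfix hζ.le
      rw [hξ₀s] at this
      have h2 : (cbIter K ζ).Nonempty := by
        rw [Set.nonempty_iff_ne_empty]
        intro hemp
        have hin : ζ ∈ s := hemp
        exact absurd (csInf_le' hin) (not_le.mpr hζ)
      rw [← this] at h2
      exact h2.ne_empty rfl
  have hch : ∀ ζ : Ordinal.{u}, ζ < ξ₀ → ∃ x, x ∈ cbIter K ζ ∧ x ∉ cbIter K (ζ + 1) := by
    intro ζ hζ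
    exact Set.exists_of_ssubset
      ((cbIter_antitone K (le_of_lt (lt_add_one ζ))).ssubset_of_ne (hlt ζ hζ).2)
  choose! x hx1 hx2 using hch
  have hxK : ∀ ζ < ξ₀, x ζ ∈ K := fun ζ hζ =>
    (cbIter_zero K) ▸ cbIter_antitone K (zero_le (a := ζ)) (hx1 ζ hζ)
  let f : ξ₀.ToType → ↥K := fun t =>
    ⟨x ((Ordinal.ToType.mk (o := ξ₀)).symm t).1, hxK _ ((Ordinal.ToType.mk (o := ξ₀)).symm t).2⟩
  have hfinj : Function.Injective f := by
    intro t t' hEq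
    have hEq' : x ((Ordinal.ToType.mk (o := ξ₀)).symm t).1
        = x ((Ordinal.ToType.mk (o := ξ₀)).symm t').1 :=
      congrArg Subtype.val hEq
    set ζ := ((Ordinal.ToType.mk (o := ξ₀)).symm t).1 with hζdef
    set ζ' := ((Ordinal.ToType.mk (o := ξ₀)).symm t').1 with hζ'def
    have hζlt : ζ < ξ₀ := ((Ordinal.ToType.mk (o := ξ₀)).symm t).2
    have hζ'lt : ζ' < ξ₀ := ((Ordinal.ToType.mk (o := ξ₀)).symm t').2
    have : ζ = ζ' := by
      by_contra hne
      rcases Ne.lt_or_gt hne with hl | hl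
      · have h1 : x ζ' ∈ cbIter K (ζ + 1) :=
          cbIter_antitone K (Order.add_one_le_iff.mpr hl) (hx1 ζ' hζ'lt)
        rw [← hEq'] at h1
        exact hx2 ζ hζlt h1
      · have h1 : x ζ ∈ cbIter K (ζ' + 1) :=
          cbIter_antitone K (Order.add_one_le_iff.mpr hl) (hx1 ζ hζlt)
        rw [hEq'] at h1
        exact hx2 ζ' hζ'lt h1
    have := Subtype.ext (hζdef ▸ hζ'def ▸ this :
      (((Ordinal.ToType.mk (o := ξ₀)).symm t) : Ordinal) = ((Ordinal.ToType.mk (o := ξ₀)).symm t'))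
    exact (Ordinal.ToType.mk (o := ξ₀)).symm.injective this
  have hcard : ξ₀.card ≤ Cardinal.aleph0 := by
    have h1 : Cardinal.lift.{0} (Cardinal.mk ξ₀.ToType) ≤ Cardinal.lift.{u} (Cardinal.mk ↥K) :=
      Cardinal.lift_mk_le'.mpr ⟨⟨f, hfinj⟩⟩
    rw [Cardinal.lift_uzero, Cardinal.mk_toType] at h1
    exact h1.trans ((Cardinal.lift_le.mpr hK.le_aleph0).trans_eq Cardinal.lift_aleph0)
  rw [Cardinal.lt_ord]
  exact lt_of_le_of_lt hcard Cardinal.aleph0_lt_aleph_one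

/-- The main bridge: no infinite `M` iff some CB iterate is empty (any universe). -/
lemma no_infinite_iff_empty (G : Set (Finset ℕ)) (hG : Hereditary G) :
    (¬ ∃ M : Set ℕ, M.Infinite ∧ ∀ F : Finset ℕ, ↑F ⊆ M → F ∈ G) ↔
      ∃ ξ : Ordinal.{u}, cbIter (toCantor '' G) ξ = ∅ := by
  constructor
  · intro h
    obtain ⟨ζ, hfix⟩ := exists_cb_fixed.{u} (toCantor '' G)
    refine ⟨ζ, ?_⟩
    by_contra hne
    have hSne : (cbIter (toCantor '' G) ζ).Nonempty := Set.nonempty_iff_ne_empty.mpr hne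
    have hSA : cbIter (toCantor '' G) ζ ⊆ toCantor '' G := by
      have h0 : cbIter (toCantor '' G) ζ ⊆ cbIter (toCantor '' G) 0 :=
        cbIter_antitone _ (zero_le (a := ζ))
      rwa [cbIter_zero] at h0
    have hSfix : cbIter (toCantor '' G) ζ ⊆ cbDeriv (cbIter (toCantor '' G) ζ) := by
      rw [← cbIter_succ, hfix]
    exact h (exists_infinite_of_fixed hG hSA hSfix hSne)
  · rintro ⟨ξ, hξ⟩ ⟨M, hM, hsub⟩
    have := infinite_cbIter_nonempty (G := G) hM hsub ξ
    rw [hξ] at this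
    exact Set.not_nonempty_empty this

/-- For a hereditary family `𝒢` of finite subsets of `ℕ`, the following are equivalent:
(i) there is no infinite `M ⊆ ℕ` all of whose finite subsets belong to `𝒢`;
(ii) `𝒢` is compact in the Cantor topology;
(iii) some Cantor–Bendixson derivative of `𝒢` is empty (`CB(𝒢) < ∞`);
(iv) some Cantor–Bendixson derivative of `𝒢` of countable index is empty (`CB(𝒢) < ω₁`). -/
theorem hereditary_tfae (G : Set (Finset ℕ)) (hG : Hereditary G) :
    ((¬ ∃ M : Set ℕ, M.Infinite ∧ ∀ F : Finset ℕ, ↑F ⊆ M → F ∈ G) ↔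
        IsCompact (toCantor '' G)) ∧
    (IsCompact (toCantor '' G) ↔ ∃ ξ : Ordinal, cbIter (toCantor '' G) ξ = ∅) ∧
    ((∃ ξ : Ordinal, cbIter (toCantor '' G) ξ = ∅) ↔
        ∃ ξ : Ordinal, ξ < (Cardinal.aleph 1).ord ∧ cbIter (toCantor '' G) ξ = ∅) := by
  have hAcount : (toCantor '' G).Countable := (Set.to_countable G).image toCantor
  refine ⟨⟨?_, ?_⟩, ⟨?_, ?_⟩, ⟨?_, ?_⟩⟩
  · intro h
    exact (closed_of_no_infinite hG h).isCompact
  · rintro hc ⟨M, hM, hsub⟩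
    exact not_compact_of_infinite hM hsub hc
  · intro hc
    refine (no_infinite_iff_empty G hG).mp ?_
    rintro ⟨M, hM, hsub⟩
    exact not_compact_of_infinite hM hsub hc
  · intro hx
    exact (closed_of_no_infinite hG ((no_infinite_iff_empty G hG).mpr hx)).isCompact
  · intro hx
    exact cb_countable_bound _ hAcount
      ((no_infinite_iff_empty G hG).mp ((no_infinite_iff_empty G hG).mpr hx))
  · rintro ⟨ξ, _, hξ⟩
    exact (no_infinite_iff_empty G hG).mp ((no_infinite_iff_empty G hG).mpr ⟨ξ, hξ⟩)
end

section
/- If ℱ, 𝒢 ⊆ [ℕ]^{<ℕ} are hereditary families, then for any infinite M ⊆ ℕ there exists an infinite N ⊆ M such that either every element of ℱ contained in N belongs to 𝒢, or every element of 𝒢 contained in N belongs to ℱ. -/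
namespace NWaux


/-- every element of `X` is above every element of `s`. -/
def Below (s : Finset ℕ) (X : Set ℕ) : Prop := ∀ x ∈ X, ∀ y ∈ s, y < x

/-- `t` is an initial segment of `X`. -/
def InitSeg (t : Finset ℕ) (X : Set ℕ) : Prop :=
  ↑t ⊆ X ∧ ∀ x ∈ X, x ∉ t → ∀ y ∈ t, y < x

def Accepts (𝒜 : Set (Finset ℕ)) (s : Finset ℕ) (A : Set ℕ) : Prop :=
  ∀ X : Set ℕ, X ⊆ A → X.Infinite → Below s X → ∃ t ∈ 𝒜, InitSeg t (↑s ∪ X)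

def Rejects (𝒜 : Set (Finset ℕ)) (s : Finset ℕ) (A : Set ℕ) : Prop :=
  ∀ B ⊆ A, B.Infinite → ¬ Accepts 𝒜 s B

lemma accepts_mono {𝒜 : Set (Finset ℕ)} {s : Finset ℕ} {A B : Set ℕ} (h : B ⊆ A)
    (hA : Accepts 𝒜 s A) : Accepts 𝒜 s B :=
  fun X hX => hA X (hX.trans h)

lemma rejects_mono {𝒜 : Set (Finset ℕ)} {s : Finset ℕ} {A B : Set ℕ} (h : B ⊆ A)
    (hA : Rejects 𝒜 s A) : Rejects 𝒜 s B :=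
  fun C hC => hA C (hC.trans h)

lemma mem_accepts {𝒜 : Set (Finset ℕ)} {s : Finset ℕ} (hs : s ∈ 𝒜) (A : Set ℕ) :
    Accepts 𝒜 s A := by
  intro X _ _ hbX
  refine ⟨s, hs, ?_, ?_⟩
  · exact Set.subset_union_left
  · intro x hx hxs y hy
    rcases hx with hx | hx
    · exact absurd hx hxs
    · exact hbX x hx y hy

lemma decide_one (𝒜 : Set (Finset ℕ)) (s : Finset ℕ) {A : Set ℕ} (hA : A.Infinite) :
    ∃ B ⊆ A, B.Infinite ∧ (Accepts 𝒜 s B ∨ Rejects 𝒜 s B) := by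
  by_cases h : Rejects 𝒜 s A
  · exact ⟨A, subset_rfl, hA, Or.inr h⟩
  · unfold Rejects at h
    push_neg at h
    obtain ⟨B, hBA, hBinf, hB⟩ := h
    exact ⟨B, hBA, hBinf, Or.inl hB⟩

lemma decide_all (𝒜 : Set (Finset ℕ)) (𝔖 : Finset (Finset ℕ)) {A : Set ℕ} (hA : A.Infinite) :
    ∃ B ⊆ A, B.Infinite ∧ ∀ s ∈ 𝔖, Accepts 𝒜 s B ∨ Rejects 𝒜 s B := by
  classical
  induction 𝔖 using Finset.induction_on generalizing A with
  | empty => exact ⟨A, subset_rfl, hA, by simp⟩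
  | @insert s 𝔖 hs ih =>
    obtain ⟨B, hBA, hBinf, hB⟩ := ih hA
    obtain ⟨C, hCB, hCinf, hC⟩ := decide_one 𝒜 s hBinf
    refine ⟨C, hCB.trans hBA, hCinf, ?_⟩
    intro u hu
    rcases Finset.mem_insert.mp hu with rfl | hu
    · exact hC
    · rcases hB u hu with h | h
      · exact Or.inl (accepts_mono hCB h)
      · exact Or.inr (rejects_mono hCB h)


lemma inter_Ioi_infinite {N : Set ℕ} (hN : N.Infinite) (m : ℕ) :
    (N ∩ Set.Ioi m).Infinite := by
  have hsub : N \ Set.Iic m ⊆ N ∩ Set.Ioi m := by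
    intro x hx
    exact ⟨hx.1, by simpa [Set.mem_Iic, not_le] using hx.2⟩
  exact ((hN.diff (Set.finite_Iic m))).mono hsub

structure St (𝒜 : Set (Finset ℕ)) (M : Set ℕ) where
  S : Finset ℕ
  A : Set ℕ
  inf : A.Infinite
  sub : A ⊆ M
  big : ∀ x ∈ A, ∀ y ∈ S, y < x
  dec : ∀ s ⊆ S, Accepts 𝒜 s A ∨ Rejects 𝒜 s A

lemma step {𝒜 : Set (Finset ℕ)} {M : Set ℕ} (p : St 𝒜 M) :
    ∃ q : St 𝒜 M, ∃ a ∈ p.A, q.S = insert a p.S ∧ q.A ⊆ p.A ∩ Set.Ioi a := by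
  classical
  obtain ⟨a, ha⟩ := p.inf.nonempty
  have h1 : (p.A ∩ Set.Ioi a).Infinite := inter_Ioi_infinite p.inf a
  obtain ⟨B, hB1, hB2, hB3⟩ := decide_all 𝒜 (insert a p.S).powerset h1
  refine ⟨⟨insert a p.S, B, hB2, fun x hx => p.sub (hB1 hx).1, ?_, ?_⟩, a, ha, rfl, hB1⟩
  · intro x hx y hy
    rcases Finset.mem_insert.mp hy with rfl | hy
    · exact (hB1 hx).2
    · exact p.big x (hB1 hx).1 y hy
  · intro s hs
    exact hB3 s (Finset.mem_powerset.mpr hs)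

noncomputable def seq {𝒜 : Set (Finset ℕ)} {M : Set ℕ} (p0 : St 𝒜 M) : ℕ → St 𝒜 M
  | 0 => p0
  | k + 1 => Classical.choose (step (seq p0 k))

lemma seq_spec {𝒜 : Set (Finset ℕ)} {M : Set ℕ} (p0 : St 𝒜 M) (k : ℕ) :
    ∃ a ∈ (seq p0 k).A, (seq p0 (k + 1)).S = insert a (seq p0 k).S ∧
      (seq p0 (k + 1)).A ⊆ (seq p0 k).A ∩ Set.Ioi a :=
  Classical.choose_spec (step (seq p0 k))

noncomputable def pt {𝒜 : Set (Finset ℕ)} {M : Set ℕ} (p0 : St 𝒜 M) (k : ℕ) : ℕ :=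
  (seq_spec p0 k).choose

lemma pt_mem {𝒜 : Set (Finset ℕ)} {M : Set ℕ} (p0 : St 𝒜 M) (k : ℕ) :
    pt p0 k ∈ (seq p0 k).A :=
  (seq_spec p0 k).choose_spec.1

lemma S_succ {𝒜 : Set (Finset ℕ)} {M : Set ℕ} (p0 : St 𝒜 M) (k : ℕ) :
    (seq p0 (k + 1)).S = insert (pt p0 k) (seq p0 k).S :=
  (seq_spec p0 k).choose_spec.2.1

lemma A_succ {𝒜 : Set (Finset ℕ)} {M : Set ℕ} (p0 : St 𝒜 M) (k : ℕ) :
    (seq p0 (k + 1)).A ⊆ (seq p0 k).A ∩ Set.Ioi (pt p0 k) :=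
  (seq_spec p0 k).choose_spec.2.2

lemma A_mono {𝒜 : Set (Finset ℕ)} {M : Set ℕ} (p0 : St 𝒜 M) :
    ∀ {j k : ℕ}, j ≤ k → (seq p0 k).A ⊆ (seq p0 j).A := by
  intro j k h
  induction k with
  | zero => rw [Nat.le_zero.mp h]
  | succ k ih =>
    rcases Nat.lt_or_ge j (k+1) with h' | h'
    · exact ((A_succ p0 k).trans Set.inter_subset_left).trans (ih (Nat.lt_succ_iff.mp h'))
    · rw [Nat.le_antisymm h h']

lemma pt_strictMono {𝒜 : Set (Finset ℕ)} {M : Set ℕ} (p0 : St 𝒜 M) : StrictMono (pt p0) := by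
  apply strictMono_nat_of_lt_succ
  intro k
  exact (A_succ p0 k (pt_mem p0 (k+1))).2

lemma pt_mem_S {𝒜 : Set (Finset ℕ)} {M : Set ℕ} (p0 : St 𝒜 M) :
    ∀ k i, i < k → pt p0 i ∈ (seq p0 k).S := by
  intro k
  induction k with
  | zero => omega
  | succ k ih =>
    intro i hi
    rw [S_succ]
    rcases Nat.lt_or_ge i k with h | h
    · exact Finset.mem_insert_of_mem (ih i h)
    · have : i = k := by omega
      subst this
      exact Finset.mem_insert_self _ _

theorem fusion (𝒜 : Set (Finset ℕ)) {M : Set ℕ} (hM : M.Infinite) :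
    ∃ f : ℕ → ℕ, StrictMono f ∧ (∀ k, f k ∈ M) ∧
      ∀ s : Finset ℕ, ↑s ⊆ Set.range f → ∀ j : ℕ, (∀ y ∈ s, y ≤ f j) →
        Accepts 𝒜 s (Set.range f ∩ Set.Ioi (f j)) ∨
        Rejects 𝒜 s (Set.range f ∩ Set.Ioi (f j)) := by
  classical
  obtain ⟨B, hBM, hBinf, hBdec⟩ := decide_one 𝒜 ∅ hM
  set p0 : St 𝒜 M := ⟨∅, B, hBinf, hBM, by simp, by
    intro s hs
    rw [Finset.subset_empty.mp hs]
    exact hBdec⟩ with hp0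
  set f := pt p0 with hf
  have hmono : StrictMono f := pt_strictMono p0
  refine ⟨f, hmono, fun k => (seq p0 k).sub (pt_mem p0 k), ?_⟩
  intro s hs j hj
  -- s ⊆ S (j+1)
  have hsS : s ⊆ (seq p0 (j+1)).S := by
    intro y hy
    obtain ⟨i, rfl⟩ := hs hy
    have : i ≤ j := hmono.le_iff_le.mp (hj _ hy)
    exact pt_mem_S p0 (j+1) i (by omega)
  -- tail ⊆ A (j+1)
  have htail : Set.range f ∩ Set.Ioi (f j) ⊆ (seq p0 (j+1)).A := by
    rintro x ⟨⟨i, rfl⟩, hx⟩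
    have : j < i := hmono.lt_iff_lt.mp hx
    exact A_mono p0 this (pt_mem p0 i)
  rcases (seq p0 (j+1)).dec s hsS with h | h
  · exact Or.inl (accepts_mono htail h)
  · exact Or.inr (rejects_mono htail h)


lemma rejects_of_tail {𝒜 : Set (Finset ℕ)} {s : Finset ℕ} {N : Set ℕ} {m : ℕ}
    (h : Rejects 𝒜 s (N ∩ Set.Ioi m)) : Rejects 𝒜 s N := by
  intro B hBN hBinf hacc
  exact h (B ∩ Set.Ioi m) (fun x hx => ⟨hBN hx.1, hx.2⟩) (inter_Ioi_infinite hBinf m)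
    (accepts_mono Set.inter_subset_left hacc)

/-- Key finiteness lemma: if `N` rejects `s`, then only finitely many one-point extensions
of `s` by an element of `N` are accepted by the corresponding tail of `N`. -/
lemma ext_finite {𝒜 : Set (Finset ℕ)} {s : Finset ℕ} {N : Set ℕ}
    (hrej : Rejects 𝒜 s N) :
    {n : ℕ | n ∈ N ∧ (∀ y ∈ s, y < n) ∧ Accepts 𝒜 (insert n s) (N ∩ Set.Ioi n)}.Finite := by
  classical
  by_contra hinf
  have hinf : Set.Infinite {n : ℕ | n ∈ N ∧ (∀ y ∈ s, y < n) ∧ Accepts 𝒜 (insert n s) (N ∩ Set.Ioi n)} := hinf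
  set Fs := {n : ℕ | n ∈ N ∧ (∀ y ∈ s, y < n) ∧ Accepts 𝒜 (insert n s) (N ∩ Set.Ioi n)} with hFs
  have hFsN : Fs ⊆ N := fun n hn => hn.1
  apply hrej Fs hFsN hinf
  intro X hX hXinf hbel
  have hXne : X.Nonempty := hXinf.nonempty
  set n := sInf X with hn
  have hnX : n ∈ X := Nat.sInf_mem hXne
  set X' := X ∩ Set.Ioi n with hX'
  have hXeq : X = insert n X' := by
    ext x
    constructor
    · intro hx
      rcases eq_or_ne x n with rfl | hne
      · exact Set.mem_insert _ _
      · refine Set.mem_insert_of_mem _ ⟨hx, ?_⟩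
        have h2 := Nat.sInf_le hx
        rw [← hn] at h2
        simp only [Set.mem_Ioi]
        omega
    · rintro (rfl | hx)
      · exact hnX
      · exact hx.1
  have hX'sub : X' ⊆ N ∩ Set.Ioi n := fun x hx => ⟨(hX hx.1).1, hx.2⟩
  have hX'inf : X'.Infinite := inter_Ioi_infinite hXinf n
  have hbel' : Below (insert n s) X' := by
    intro x hx y hy
    rcases Finset.mem_insert.mp hy with rfl | hy
    · exact hx.2
    · exact hbel x hx.1 y hy
  obtain ⟨t, ht, hinit⟩ := (hX hnX).2.2 X' hX'sub hX'inf hbel'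
  refine ⟨t, ht, ?_⟩
  have : (↑(insert n s) : Set ℕ) ∪ X' = ↑s ∪ X := by
    rw [hXeq, Finset.coe_insert]
    ext x
    simp only [Set.mem_union, Set.mem_insert_iff, Finset.coe_insert]
    tauto
  rwa [this] at hinit

structure St2 (𝒜 : Set (Finset ℕ)) (N : Set ℕ) where
  T : Finset ℕ
  subN : ↑T ⊆ N
  rej : ∀ s ⊆ T, Rejects 𝒜 s N

lemma step2 {𝒜 : Set (Finset ℕ)} {N : Set ℕ} (hNinf : N.Infinite)
    (hD : ∀ s : Finset ℕ, ↑s ⊆ N → ∀ n ∈ s, (∀ y ∈ s, y ≤ n) →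
      Accepts 𝒜 s (N ∩ Set.Ioi n) ∨ Rejects 𝒜 s (N ∩ Set.Ioi n))
    (p : St2 𝒜 N) :
    ∃ q : St2 𝒜 N, ∃ b ∈ N, (∀ y ∈ p.T, y < b) ∧ q.T = insert b p.T := by
  classical
  -- the union of the bad sets over all subsets of p.T is finite
  have hbad : (⋃ s ∈ p.T.powerset,
      {n : ℕ | n ∈ N ∧ (∀ y ∈ s, y < n) ∧ Accepts 𝒜 (insert n s) (N ∩ Set.Ioi n)}).Finite := by
    apply Set.Finite.biUnion (p.T.powerset.finite_toSet)
    intro s hs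
    exact ext_finite (p.rej s (Finset.mem_powerset.mp (by simpa using hs)))
  obtain ⟨m, hm⟩ := hbad.bddAbove
  set m' := max m (p.T.sup id) with hm'
  obtain ⟨b, hbN, hb⟩ : ∃ b, b ∈ N ∧ m' < b := by
    obtain ⟨b, hb1, hb2⟩ := (inter_Ioi_infinite hNinf m').nonempty
    exact ⟨b, hb1, hb2⟩
  have hbT : ∀ y ∈ p.T, y < b := by
    intro y hy
    have : y ≤ p.T.sup id := Finset.le_sup (f := id) hy
    omega
  -- b is not in any bad set
  have hnotbad : ∀ s ⊆ p.T, ¬ Accepts 𝒜 (insert b s) (N ∩ Set.Ioi b) := by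
    intro s hsT hacc
    have : b ∈ ⋃ s ∈ p.T.powerset,
        {n : ℕ | n ∈ N ∧ (∀ y ∈ s, y < n) ∧ Accepts 𝒜 (insert n s) (N ∩ Set.Ioi n)} := by
      exact Set.mem_iUnion₂.mpr ⟨s, Finset.mem_powerset.mpr hsT,
        ⟨hbN, fun y hy => hbT y (hsT hy), hacc⟩⟩
    have := hm this
    omega
  -- hence all extensions are rejected
  have hrejext : ∀ s ⊆ p.T, Rejects 𝒜 (insert b s) N := by
    intro s hsT
    have hsub : (↑(insert b s) : Set ℕ) ⊆ N := by
      rw [Finset.coe_insert]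
      exact Set.insert_subset hbN ((Finset.coe_subset.mpr hsT).trans p.subN)
    have hmax : ∀ y ∈ insert b s, y ≤ b := by
      intro y hy
      rcases Finset.mem_insert.mp hy with rfl | hy
      · exact le_rfl
      · exact (hbT y (hsT hy)).le
    rcases hD (insert b s) hsub b (Finset.mem_insert_self _ _) hmax with h | h
    · exact absurd h (hnotbad s hsT)
    · exact rejects_of_tail h
  refine ⟨⟨insert b p.T, ?_, ?_⟩, b, hbN, hbT, rfl⟩
  · rw [Finset.coe_insert]
    exact Set.insert_subset hbN p.subN
  · intro s hs
    by_cases hbs : b ∈ s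
    · have h1 : s.erase b ⊆ p.T := by
        intro y hy
        rcases Finset.mem_insert.mp (hs (Finset.mem_of_mem_erase hy)) with rfl | h
        · exact absurd rfl (Finset.ne_of_mem_erase hy)
        · exact h
      have := hrejext (s.erase b) h1
      rwa [Finset.insert_erase hbs] at this
    · have h1 : s ⊆ p.T := by
        intro y hy
        rcases Finset.mem_insert.mp (hs hy) with rfl | h
        · exact absurd hy hbs
        · exact h
      exact p.rej s h1

noncomputable def seq2 {𝒜 : Set (Finset ℕ)} {N : Set ℕ} (hNinf : N.Infinite)
    (hD : ∀ s : Finset ℕ, ↑s ⊆ N → ∀ n ∈ s, (∀ y ∈ s, y ≤ n) →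
      Accepts 𝒜 s (N ∩ Set.Ioi n) ∨ Rejects 𝒜 s (N ∩ Set.Ioi n))
    (p0 : St2 𝒜 N) : ℕ → St2 𝒜 N
  | 0 => p0
  | k + 1 => Classical.choose (step2 hNinf hD (seq2 hNinf hD p0 k))

lemma seq2_spec {𝒜 : Set (Finset ℕ)} {N : Set ℕ} (hNinf : N.Infinite)
    (hD : ∀ s : Finset ℕ, ↑s ⊆ N → ∀ n ∈ s, (∀ y ∈ s, y ≤ n) →
      Accepts 𝒜 s (N ∩ Set.Ioi n) ∨ Rejects 𝒜 s (N ∩ Set.Ioi n))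
    (p0 : St2 𝒜 N) (k : ℕ) :
    ∃ b ∈ N, (∀ y ∈ (seq2 hNinf hD p0 k).T, y < b) ∧
      (seq2 hNinf hD p0 (k+1)).T = insert b (seq2 hNinf hD p0 k).T :=
  Classical.choose_spec (step2 hNinf hD (seq2 hNinf hD p0 k))

/-- Nash–Williams theorem. -/
theorem nash_williams (𝒜 : Set (Finset ℕ)) {M : Set ℕ} (hM : M.Infinite) :
    ∃ N : Set ℕ, N ⊆ M ∧ N.Infinite ∧
      ((∀ s ∈ 𝒜, ¬ (↑s : Set ℕ) ⊆ N) ∨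
       (∀ X : Set ℕ, X ⊆ N → X.Infinite → ∃ t ∈ 𝒜, InitSeg t X)) := by
  classical
  by_cases hrej : Rejects 𝒜 (∅ : Finset ℕ) M
  · -- rejection case : fusion + thinning, left alternative
    obtain ⟨f, hmono, hfM, hdec⟩ := fusion 𝒜 hM
    set N := Set.range f with hN
    have hNM : N ⊆ M := Set.range_subset_iff.mpr hfM
    have hNinf : N.Infinite := Set.infinite_range_of_injective hmono.injective
    have hD : ∀ s : Finset ℕ, ↑s ⊆ N → ∀ n ∈ s, (∀ y ∈ s, y ≤ n) →
        Accepts 𝒜 s (N ∩ Set.Ioi n) ∨ Rejects 𝒜 s (N ∩ Set.Ioi n) := by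
      intro s hsN n hns hsmax
      obtain ⟨j, rfl⟩ := hsN hns
      exact hdec s hsN j hsmax
    have hrejN : Rejects 𝒜 (∅ : Finset ℕ) N := rejects_mono hNM hrej
    set p0 : St2 𝒜 N := ⟨∅, by simp, by
      intro s hs
      rw [Finset.subset_empty.mp hs]
      exact hrejN⟩ with hp0
    set q := seq2 hNinf hD p0 with hq
    set b : ℕ → ℕ := fun k => (seq2_spec hNinf hD p0 k).choose with hb
    have hbN : ∀ k, b k ∈ N := fun k => (seq2_spec hNinf hD p0 k).choose_spec.1
    have hbT : ∀ k, ∀ y ∈ (q k).T, y < b k :=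
      fun k => (seq2_spec hNinf hD p0 k).choose_spec.2.1
    have hTsucc : ∀ k, (q (k+1)).T = insert (b k) (q k).T :=
      fun k => (seq2_spec hNinf hD p0 k).choose_spec.2.2
    have hbmemT : ∀ k, b k ∈ (q (k+1)).T := by
      intro k; rw [hTsucc]; exact Finset.mem_insert_self _ _
    have hTmono : ∀ {j k : ℕ}, j ≤ k → (q j).T ⊆ (q k).T := by
      intro j k h
      induction k with
      | zero => rw [Nat.le_zero.mp h]
      | succ k ih =>
        rcases Nat.lt_or_ge j (k+1) with h' | h'
        · rw [hTsucc]
          exact (ih (Nat.lt_succ_iff.mp h')).trans (Finset.subset_insert _ _)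
        · rw [Nat.le_antisymm h h']
    have hbmono : StrictMono b := by
      apply strictMono_nat_of_lt_succ
      intro k
      exact hbT (k+1) (b k) (hbmemT k)
    refine ⟨Set.range b, (Set.range_subset_iff.mpr hbN).trans hNM,
      Set.infinite_range_of_injective hbmono.injective, Or.inl ?_⟩
    intro s hs hsub
    -- s is contained in some (q k).T
    have key : ∀ u : Finset ℕ, ↑u ⊆ Set.range b → ∃ k, u ⊆ (q k).T := by
      intro u
      induction u using Finset.induction_on with
      | empty => exact fun _ => ⟨0, by simp [hp0]⟩
      | @insert y u hyu ih =>
        intro husub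
        obtain ⟨k, hk⟩ := ih ((Finset.coe_subset.mpr (Finset.subset_insert y u)).trans husub)
        obtain ⟨i, rfl⟩ : ∃ i, b i = y := husub (by simp)
        refine ⟨max (i+1) k, Finset.insert_subset
          (hTmono (le_max_left _ _) (hbmemT i)) (hk.trans (hTmono (le_max_right _ _)))⟩
    obtain ⟨k, hk⟩ := key s hsub
    have hrejs : Rejects 𝒜 s N := (q k).rej s hk
    exact hrejs (Set.range b) (Set.range_subset_iff.mpr hbN)
      (Set.infinite_range_of_injective hbmono.injective) (mem_accepts hs _)
  · -- acceptance case : right alternative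
    unfold Rejects at hrej
    push_neg at hrej
    obtain ⟨B, hBM, hBinf, hBacc⟩ := hrej
    refine ⟨B, hBM, hBinf, Or.inr ?_⟩
    intro X hX hXinf
    obtain ⟨t, ht, hinit⟩ := hBacc X hX hXinf (by simp [Below])
    refine ⟨t, ht, ?_⟩
    rwa [Finset.coe_empty, Set.empty_union] at hinit


end NWaux

open NWaux in
/-- Gasparis' dichotomy: if `ℱ, 𝒢` are hereditary families of finite subsets of `ℕ`,
then any infinite `M ⊆ ℕ` has an infinite subset `N` such that either every member of
`ℱ` contained in `N` lies in `𝒢`, or every member of `𝒢` contained in `N` lies in `ℱ`. -/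
theorem gasparis_dichotomy (F G : Set (Finset ℕ)) (hF : Hereditary F) (hG : Hereditary G)
    (M : Set ℕ) (hM : M.Infinite) :
    ∃ N : Set ℕ, N ⊆ M ∧ N.Infinite ∧
      ((∀ E ∈ F, ↑E ⊆ N → E ∈ G) ∨ (∀ E ∈ G, ↑E ⊆ N → E ∈ F)) := by
  classical
  obtain ⟨N, hNM, hNinf, hN⟩ := nash_williams {s : Finset ℕ | s ∈ F ∧ s ∉ G} hM
  refine ⟨N, hNM, hNinf, ?_⟩
  rcases hN with h | h
  · left
    intro E hEF hEN
    by_contra hEG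
    exact h E ⟨hEF, hEG⟩ hEN
  · right
    intro E hEG hEN
    set m := E.sup id with hm
    set X : Set ℕ := ↑E ∪ (N ∩ Set.Ioi m) with hX
    have hXN : X ⊆ N := Set.union_subset hEN Set.inter_subset_left
    have hXinf : X.Infinite := (inter_Ioi_infinite hNinf m).mono Set.subset_union_right
    obtain ⟨t, ⟨htF, htG⟩, hinit⟩ := h X hXN hXinf
    by_cases hte : t ⊆ E
    · exact absurd (hG hte hEG) htG
    · obtain ⟨x, hxt, hxE⟩ := Finset.not_subset.mp hte
      have hxX : x ∈ X := hinit.1 hxt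
      have hxm : m < x := by
        rcases hxX with hx | hx
        · exact absurd (Finset.mem_coe.mp hx) hxE
        · exact hx.2
      have hEt : E ⊆ t := by
        intro y hy
        by_contra hyt
        have hyX : y ∈ X := Or.inl (Finset.mem_coe.mpr hy)
        have h2 := hinit.2 y hyX hyt x hxt
        have hym : y ≤ m := Finset.le_sup (f := id) hy
        omega
      exact hF hEt htF
end
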